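/- Let n ≥ 1, k ≥ 1. For each x = (x_1,...,x_k) ∈ ℤ^k with n ≥ x_1 ≥ ... ≥ x_k ≥ 0, define the input assignment inp(x): [n] → {0,...,k} by inp(x)(j) = |{i ∈ [k] : x_i ≥ j}|. Let I_sub be the simplicial complex on vertex set [n] × {0,...,k} whose facets are σ_x = {(j, inp(x)(j)) : j ∈ [n]} over all such x, closed under subsets. Then I_sub (the Kuhn triangulation input complex) is shellable, and the lexicographic order on the index tuples x is a shelling order of its facets. -/

import Mathlib

def IsComplex {V : Type*} (S : Set (Finset V)) : Prop :=
  ∀ s ∈ S, s.Nonempty ∧ ∀ t : Finset V, t ⊆ s → t.Nonempty → t ∈ S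

def IsFacet {V : Type*} (S : Set (Finset V)) (s : Finset V) : Prop :=
  s ∈ S ∧ ∀ t ∈ S, s ⊆ t → s = t

def IsPure {V : Type*} (S : Set (Finset V)) (d : ℕ) : Prop :=
  ∀ s, IsFacet S s → s.card = d + 1

/-- An ordering `φ 0, …, φ N` of facets (all of cardinality `d+1`) is a shelling order:
for every `k ≥ 1`, the intersection of `φ k` with the union of the previous facets is a
nonempty union of `(d-1)`-dimensional faces (i.e. faces of cardinality `d`) of `φ k`. -/
def IsShellingOrder {V : Type*} (d N : ℕ) (φ : Fin (N + 1) → Finset V) : Prop :=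
  ∀ k : Fin (N + 1), 0 < (k : ℕ) →
    (∃ t : Finset V, t ⊆ φ k ∧ t.card = d ∧ ∃ i : Fin (N + 1), (i : ℕ) < (k : ℕ) ∧ t ⊆ φ i) ∧
    (∀ t : Finset V, t.Nonempty → t ⊆ φ k →
      (∃ i : Fin (N + 1), (i : ℕ) < (k : ℕ) ∧ t ⊆ φ i) →
      ∃ t' : Finset V, t ⊆ t' ∧ t' ⊆ φ k ∧ t'.card = d ∧
        ∃ i : Fin (N + 1), (i : ℕ) < (k : ℕ) ∧ t' ⊆ φ i)

/-- A complex is shellable of dimension `d` if it is pure of dimension `d` and its facets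
admit an enumeration which is a shelling order. -/
def Shellable {V : Type*} (S : Set (Finset V)) (d : ℕ) : Prop :=
  IsPure S d ∧ ∃ (N : ℕ) (φ : Fin (N + 1) → Finset V),
    Function.Injective φ ∧ (∀ i, IsFacet S (φ i)) ∧
    (∀ s, IsFacet S s → ∃ i, φ i = s) ∧ IsShellingOrder d N φ

/-- `x : Fin k → ℕ` is a valid Kuhn index tuple: `n ≥ x 0 ≥ x 1 ≥ … ≥ x (k-1) ≥ 0`. -/
def validX (n k : ℕ) (x : Fin k → ℕ) : Prop :=
  (∀ i, x i ≤ n) ∧ ∀ i j : Fin k, i ≤ j → x j ≤ x i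

/-- The input assignment `inp(x) : [n] → {0, …, k}` given by
`inp(x)(j) = |{i ∈ [k] : x i ≥ j}|`; here process `j : Fin n` stands for number `j + 1`. -/
def inpFun (n k : ℕ) (x : Fin k → ℕ) : Fin n → ℕ :=
  fun j => (Finset.univ.filter (fun i : Fin k => (j : ℕ) + 1 ≤ x i)).card

/-- The facet `σ_x = {(j, inp(x)(j)) : j ∈ [n]}`. -/
def facetX (n k : ℕ) (x : Fin k → ℕ) : Finset (Fin n × ℕ) :=
  Finset.univ.image (fun j : Fin n => (j, inpFun n k x j))

/-- The Kuhn triangulation input complex `I_sub`: all nonempty subsets of the facets `σ_x`. -/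
def IsubC (n k : ℕ) : Set (Finset (Fin n × ℕ)) :=
  {s | s.Nonempty ∧ ∃ x : Fin k → ℕ, validX n k x ∧ s ⊆ facetX n k x}

/-- Strict lexicographic order on index tuples. -/
def lexLt {k : ℕ} (x y : Fin k → ℕ) : Prop :=
  ∃ i : Fin k, (∀ j : Fin k, j < i → x j = y j) ∧ x i < y i

/-- The Kuhn triangulation input complex `I_sub` is shellable, and the
lexicographic order on the index tuples is a shelling order of its facets, i.e. for all
valid `x, y` with `y ≺ x` there is a valid `w ≺ x` with `σ_y ∩ σ_x ⊆ σ_w ∩ σ_x` and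
`|σ_x ∖ σ_w| = 1`. -/
noncomputable instance kuhnLexLO (k : ℕ) : LinearOrder (Lex (Fin k → ℕ)) :=
  @Pi.Lex.linearOrder (Fin k) (fun _ => ℕ) _ (Finite.to_wellFoundedLT) _

lemma lexLt_iff {k : ℕ} (x y : Fin k → ℕ) : lexLt x y ↔ toLex x < toLex y := Iff.rfl

lemma mem_facetX {n k : ℕ} {x : Fin k → ℕ} (p : Fin n × ℕ) :
    p ∈ facetX n k x ↔ p.2 = inpFun n k x p.1 := by
  constructor
  · rintro hp
    obtain ⟨j, -, rfl⟩ := Finset.mem_image.mp hp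
    rfl
  · intro h
    exact Finset.mem_image.mpr ⟨p.1, Finset.mem_univ _, Prod.ext_iff.mpr ⟨rfl, h.symm⟩⟩

lemma card_facetX (n k : ℕ) (x : Fin k → ℕ) : (facetX n k x).card = n := by
  rw [facetX, Finset.card_image_of_injective _ (fun a b h => (Prod.ext_iff.mp h).1),
    Finset.card_univ, Fintype.card_fin]

lemma inpFun_congr {n k : ℕ} {x w : Fin k → ℕ} {j : Fin n}
    (h : ∀ i, ((j : ℕ) + 1 ≤ x i ↔ (j : ℕ) + 1 ≤ w i)) : inpFun n k x j = inpFun n k w j := by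
  unfold inpFun
  congr 1
  exact Finset.filter_congr (fun i _ => h i)

lemma le_inp_iff {n k : ℕ} {x : Fin k → ℕ} (hx : validX n k x) (i : Fin k) (j : Fin n) :
    (j : ℕ) + 1 ≤ x i ↔ (i : ℕ) + 1 ≤ inpFun n k x j := by
  constructor
  · intro h
    have hsub : Finset.Iic i ⊆ Finset.univ.filter (fun l => (j : ℕ) + 1 ≤ x l) := by
      intro l hl
      simp only [Finset.mem_Iic] at hl
      simp only [Finset.mem_filter, Finset.mem_univ, true_and]
      exact le_trans h (hx.2 l i hl)
    calc (i : ℕ) + 1 = (Finset.Iic i).card := (Fin.card_Iic i).symm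
      _ ≤ _ := Finset.card_le_card hsub
  · intro h
    by_contra hc
    push_neg at hc
    have hsub : Finset.univ.filter (fun l => (j : ℕ) + 1 ≤ x l) ⊆ Finset.Iio i := by
      intro l hl
      simp only [Finset.mem_filter, Finset.mem_univ, true_and] at hl
      simp only [Finset.mem_Iio]
      by_contra hli
      push_neg at hli
      exact absurd (le_trans hl (hx.2 i l hli)) (by omega)
    have h2 := Finset.card_le_card hsub
    rw [Fin.card_Iio] at h2
    unfold inpFun at h
    omega

lemma inpFun_inj {n k : ℕ} {x y : Fin k → ℕ} (hx : validX n k x) (hy : validX n k y)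
    (h : ∀ j : Fin n, inpFun n k x j = inpFun n k y j) : x = y := by
  have aux : ∀ (x y : Fin k → ℕ), validX n k x → validX n k y →
      (∀ j : Fin n, inpFun n k x j = inpFun n k y j) → ∀ i, ¬ x i < y i := by
    intro x y hx hy h i hlt
    have hjn : x i < n := lt_of_lt_of_le hlt (hy.1 i)
    have h2 : ((⟨x i, hjn⟩ : Fin n) : ℕ) + 1 ≤ y i := hlt
    have h3 := (le_inp_iff hy i ⟨x i, hjn⟩).mp h2
    rw [← h] at h3
    have h4 := (le_inp_iff hx i ⟨x i, hjn⟩).mpr h3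
    simp at h4
  funext i
  have h1 := aux x y hx hy h i
  have h2 := aux y x hy hx (fun j => (h j).symm) i
  omega

lemma facet_subset_inp {n k : ℕ} {x y : Fin k → ℕ} (h : facetX n k x ⊆ facetX n k y) :
    ∀ j : Fin n, inpFun n k x j = inpFun n k y j := by
  intro j
  exact (mem_facetX _).mp (h ((mem_facetX ((j, inpFun n k x j))).mpr rfl))

lemma facetX_eq_of_subset {n k : ℕ} {x y : Fin k → ℕ} (h : facetX n k x ⊆ facetX n k y) :
    facetX n k x = facetX n k y :=
  Finset.eq_of_subset_of_card_le h (by rw [card_facetX, card_facetX])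

lemma facetX_inj {n k : ℕ} {x y : Fin k → ℕ} (hx : validX n k x) (hy : validX n k y)
    (h : facetX n k x = facetX n k y) : x = y :=
  inpFun_inj hx hy (facet_subset_inp (le_of_eq h))

lemma kuhn_key (n k : ℕ) {x y : Fin k → ℕ} (hx : validX n k x) (hy : validX n k y)
    (hlt : lexLt y x) :
    ∃ w : Fin k → ℕ, validX n k w ∧ lexLt w x ∧
      facetX n k y ∩ facetX n k x ⊆ facetX n k w ∩ facetX n k x ∧
      (facetX n k x \ facetX n k w).card = 1 := by
  classical
  obtain ⟨i, hagree, hyi⟩ := hlt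
  have hxi1 : 1 ≤ x i := by omega
  set B : Finset (Fin k) := Finset.univ.filter (fun l => i ≤ l ∧ x l = x i) with hB
  have hiB : i ∈ B := by simp [hB]
  have hBne : B.Nonempty := ⟨i, hiB⟩
  set i' := B.max' hBne with hi'
  have hi'B : i' ∈ B := B.max'_mem hBne
  have hii' : i ≤ i' ∧ x i' = x i := by simpa [hB] using hi'B
  have hmax : ∀ l, i ≤ l → x l = x i → l ≤ i' := fun l h1 h2 =>
    B.le_max' l (by simp [hB, h1, h2])
  have hgt : ∀ l : Fin k, i' < l → x l < x i := by
    intro l hl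
    have h1 : x l ≤ x i := hii'.2 ▸ hx.2 i' l (le_of_lt hl)
    rcases lt_or_eq_of_le h1 with h | h
    · exact h
    · exact absurd (hmax l (le_trans hii'.1 (le_of_lt hl)) h) (not_le.mpr hl)
  set w := Function.update x i' (x i - 1) with hw
  have hwl : ∀ l : Fin k, l ≠ i' → w l = x l := fun l hl => Function.update_of_ne hl _ _
  have hwi' : w i' = x i - 1 := Function.update_self _ _ _
  -- validity of w
  have hvw : validX n k w := by
    constructor
    · intro l
      rcases eq_or_ne l i' with rfl | hne
      · rw [hwi']; have := hx.1 i; omega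
      · rw [hwl l hne]; exact hx.1 l
    · intro a b hab
      rcases eq_or_ne a i' with rfl | hna
      · rcases eq_or_ne b i' with rfl | hnb
        · exact le_refl _
        · rw [hwl b hnb, hwi']
          have hib : i' < b := lt_of_le_of_ne hab (Ne.symm hnb)
          have := hgt b hib
          omega
      · rw [hwl a hna]
        rcases eq_or_ne b i' with rfl | hnb
        · rw [hwi']
          have h1 : x i' ≤ x a := hx.2 a i' hab
          rw [hii'.2] at h1
          omega
        · rw [hwl b hnb]; exact hx.2 a b hab
  have hlw : lexLt w x := by
    refine ⟨i', fun j hj => hwl j (ne_of_lt hj), ?_⟩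
    rw [hwi', hii'.2]; omega
  -- inp agreement away from j0
  have hinp_eq : ∀ j : Fin n, (j : ℕ) ≠ x i - 1 → inpFun n k x j = inpFun n k w j := by
    intro j hj
    apply inpFun_congr
    intro l
    rcases eq_or_ne l i' with rfl | hne
    · rw [hwi', hii'.2]; omega
    · rw [hwl l hne]
  -- the special column j0
  have hj0n : x i - 1 < n := by have := hx.1 i; omega
  set j0 : Fin n := ⟨x i - 1, hj0n⟩ with hj0
  have hj0v : (j0 : ℕ) + 1 = x i := by simp [hj0]; omega
  have hinpx : inpFun n k x j0 = (i' : ℕ) + 1 := by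
    unfold inpFun
    rw [show (Finset.univ.filter (fun l => (j0 : ℕ) + 1 ≤ x l)) = Finset.Iic i' from ?_,
      Fin.card_Iic]
    ext l
    simp only [Finset.mem_filter, Finset.mem_univ, true_and, Finset.mem_Iic, hj0v]
    constructor
    · intro h
      by_contra hc
      push_neg at hc
      exact absurd h (by have := hgt l hc; omega)
    · intro h
      have := hx.2 l i' h
      rw [hii'.2] at this
      omega
  have hinpw : inpFun n k w j0 = (i' : ℕ) := by
    unfold inpFun
    rw [show (Finset.univ.filter (fun l => (j0 : ℕ) + 1 ≤ w l)) = Finset.Iio i' from ?_,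
      Fin.card_Iio]
    ext l
    simp only [Finset.mem_filter, Finset.mem_univ, true_and, Finset.mem_Iio, hj0v]
    rcases eq_or_ne l i' with rfl | hne
    · rw [hwi']; omega
    · rw [hwl l hne]
      constructor
      · intro h
        by_contra hc
        push_neg at hc
        have hlt2 : i' < l := lt_of_le_of_ne hc (Ne.symm hne)
        exact absurd h (by have := hgt l hlt2; omega)
      · intro h
        have h1 := hx.2 l i' (le_of_lt h)
        rw [hii'.2] at h1
        omega
  have hinpy : inpFun n k y j0 = (i : ℕ) := by
    unfold inpFun
    rw [show (Finset.univ.filter (fun l => (j0 : ℕ) + 1 ≤ y l)) = Finset.Iio i from ?_,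
      Fin.card_Iio]
    ext l
    simp only [Finset.mem_filter, Finset.mem_univ, true_and, Finset.mem_Iio, hj0v]
    constructor
    · intro h
      by_contra hc
      push_neg at hc
      have := hy.2 i l hc
      omega
    · intro h
      rw [hagree l h]
      have := hx.2 l i (le_of_lt h)
      omega
  have hyx_ne : inpFun n k y j0 ≠ inpFun n k x j0 := by
    rw [hinpy, hinpx]
    have : (i : ℕ) ≤ (i' : ℕ) := hii'.1
    omega
  refine ⟨w, hvw, hlw, ?_, ?_⟩
  · -- inclusion
    intro p hp
    rw [Finset.mem_inter] at hp ⊢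
    obtain ⟨hpy, hpx⟩ := hp
    refine ⟨?_, hpx⟩
    rw [mem_facetX] at hpy hpx ⊢
    have hne : p.1 ≠ j0 := by
      intro hEq
      rw [hEq] at hpy hpx
      exact hyx_ne (hpy ▸ hpx ▸ rfl)
    rw [hpx, hinp_eq p.1 (fun hc => hne (Fin.ext hc))]
  · -- card of difference
    have : facetX n k x \ facetX n k w = {(j0, inpFun n k x j0)} := by
      ext p
      simp only [Finset.mem_sdiff, Finset.mem_singleton, mem_facetX]
      constructor
      · rintro ⟨h1, h2⟩
        have hne : p.2 ≠ inpFun n k w p.1 := h2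
        have hj : p.1 = j0 := by
          by_contra hc
          exact hne (h1.trans (hinp_eq p.1 (fun hv => hc (Fin.ext hv))))
        rw [Prod.ext_iff]
        exact ⟨hj, by rw [h1, hj]⟩
      · rintro rfl
        refine ⟨rfl, ?_⟩
        simp only [hinpx, hinpw]
        omega
    rw [this, Finset.card_singleton]

lemma facetX_nonempty {n k : ℕ} (hn : 1 ≤ n) (x : Fin k → ℕ) : (facetX n k x).Nonempty :=
  ⟨(⟨0, hn⟩, inpFun n k x ⟨0, hn⟩), (mem_facetX _).mpr rfl⟩

lemma isFacet_iff {n k : ℕ} (hn : 1 ≤ n) (s : Finset (Fin n × ℕ)) :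
    IsFacet (IsubC n k) s ↔ ∃ x, validX n k x ∧ s = facetX n k x := by
  constructor
  · rintro ⟨⟨hne, x, hvx, hsub⟩, hmax⟩
    exact ⟨x, hvx, hmax _ ⟨facetX_nonempty hn x, x, hvx, le_refl _⟩ hsub⟩
  · rintro ⟨x, hvx, rfl⟩
    refine ⟨⟨facetX_nonempty hn x, x, hvx, le_refl _⟩, ?_⟩
    rintro t ⟨tne, z, hvz, htz⟩ hst
    have h2 := facetX_eq_of_subset (hst.trans htz)
    exact Finset.Subset.antisymm hst (h2 ▸ htz)


theorem kuhn_shellable (n k : ℕ) (hn : 1 ≤ n) (hk : 1 ≤ k) :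
    Shellable (IsubC n k) (n - 1) ∧
    (∀ x y : Fin k → ℕ, validX n k x → validX n k y → lexLt y x →
      ∃ w : Fin k → ℕ, validX n k w ∧ lexLt w x ∧
        facetX n k y ∩ facetX n k x ⊆ facetX n k w ∩ facetX n k x ∧
        (facetX n k x \ facetX n k w).card = 1) := by
  classical
  refine ⟨⟨?_, ?_⟩, fun x y hx hy h => kuhn_key n k hx hy h⟩
  · -- purity
    intro s hs
    obtain ⟨x, hvx, rfl⟩ := (isFacet_iff hn s).mp hs
    rw [card_facetX]; omega
  · -- enumeration
    set F : Finset (Fin k → ℕ) :=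
      ((Finset.univ : Finset (Fin k → Fin (n + 1))).filter
        (fun f => validX n k (fun i => (f i : ℕ)))).image (fun f i => (f i : ℕ)) with hF
    have hmemF : ∀ x : Fin k → ℕ, x ∈ F ↔ validX n k x := by
      intro x
      constructor
      · intro hx
        obtain ⟨f, hf, rfl⟩ := Finset.mem_image.mp hx
        exact (Finset.mem_filter.mp hf).2
      · intro hx
        refine Finset.mem_image.mpr ⟨fun i => ⟨x i, Nat.lt_succ_of_le (hx.1 i)⟩, ?_, rfl⟩
        exact Finset.mem_filter.mpr ⟨Finset.mem_univ _, hx⟩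
    set S : Finset (Lex (Fin k → ℕ)) := F.image toLex with hS
    have hmemS : ∀ x : Fin k → ℕ, toLex x ∈ S ↔ validX n k x := by
      intro x
      rw [hS, Finset.mem_image]
      constructor
      · rintro ⟨z, hz, hzx⟩
        have : z = x := toLex.injective hzx
        exact this ▸ (hmemF z).mp hz
      · intro hx
        exact ⟨x, (hmemF x).mpr hx, rfl⟩
    have hSne : S.Nonempty := ⟨toLex (fun _ => 0), (hmemS _).mpr ⟨fun _ => Nat.zero_le _,
      fun _ _ _ => le_refl _⟩⟩
    obtain ⟨N, hN⟩ : ∃ N, S.card = N + 1 :=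
      ⟨S.card - 1, by have := Finset.card_pos.mpr hSne; omega⟩
    set e := S.orderIsoOfFin hN with he
    set φ : Fin (N + 1) → Finset (Fin n × ℕ) := fun a => facetX n k (ofLex ((e a) : Lex (Fin k → ℕ))) with hφ
    have hvalid : ∀ a, validX n k (ofLex ((e a) : Lex (Fin k → ℕ))) := by
      intro a
      have := (e a).2
      exact (hmemS _).mp this
    -- position lemma
    have hpos : ∀ (a : Fin (N + 1)) (w : Fin k → ℕ), validX n k w →
        toLex w < ((e a) : Lex (Fin k → ℕ)) →
        ∃ b : Fin (N + 1), (b : ℕ) < (a : ℕ) ∧ φ b = facetX n k w := by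
      intro a w hvw hlt
      have hw : toLex w ∈ S := (hmemS w).mpr hvw
      refine ⟨e.symm ⟨toLex w, hw⟩, ?_, ?_⟩
      · have heq : e (e.symm ⟨toLex w, hw⟩) = ⟨toLex w, hw⟩ := e.apply_symm_apply _
        have h1 : e (e.symm ⟨toLex w, hw⟩) < e a := by
          rw [heq]
          exact Subtype.mk_lt_mk.mpr hlt
        exact e.lt_iff_lt.mp h1
      · have heq : e (e.symm ⟨toLex w, hw⟩) = ⟨toLex w, hw⟩ := e.apply_symm_apply _
        have hval : ((e (e.symm ⟨toLex w, hw⟩)) : Lex (Fin k → ℕ)) = toLex w :=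
          congrArg Subtype.val heq
        show facetX n k (ofLex _) = facetX n k w
        rw [hval]
        rfl
    -- order lemma
    have hord : ∀ a b : Fin (N + 1), a < b →
        lexLt (ofLex ((e a) : Lex (Fin k → ℕ))) (ofLex ((e b) : Lex (Fin k → ℕ))) := by
      intro a b hab
      have h1 : e a < e b := e.lt_iff_lt.mpr hab
      exact Subtype.mk_lt_mk.mp (by exact h1)
    refine ⟨N, φ, ?_, ?_, ?_, ?_⟩
    · -- injective
      intro a b hab
      have h1 : (ofLex ((e a) : Lex (Fin k → ℕ))) = (ofLex ((e b) : Lex (Fin k → ℕ))) :=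
        facetX_inj (hvalid a) (hvalid b) hab
      have h2 : ((e a) : Lex (Fin k → ℕ)) = ((e b) : Lex (Fin k → ℕ)) := h1
      exact e.injective (Subtype.ext h2)
    · -- facets
      intro a
      exact (isFacet_iff hn _).mpr ⟨_, hvalid a, rfl⟩
    · -- surjective on facets
      intro s hs
      obtain ⟨x, hvx, rfl⟩ := (isFacet_iff hn s).mp hs
      have hw : toLex x ∈ S := (hmemS x).mpr hvx
      refine ⟨e.symm ⟨toLex x, hw⟩, ?_⟩
      have hval : ((e (e.symm ⟨toLex x, hw⟩)) : Lex (Fin k → ℕ)) = toLex x :=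
        congrArg Subtype.val (e.apply_symm_apply _)
      show facetX n k (ofLex _) = facetX n k x
      rw [hval]
      rfl
    · -- shelling order
      intro b hb
      set x := ofLex ((e b) : Lex (Fin k → ℕ)) with hxdef
      have hvx : validX n k x := hvalid b
      constructor
      · -- nonempty clause
        have h0b : (0 : Fin (N + 1)) < b := by
          rw [Fin.lt_def]; simpa using hb
        have hy := hord 0 b h0b
        obtain ⟨w, hvw, hlw, hsub, hcard⟩ := kuhn_key n k hvx (hvalid 0) hy
        obtain ⟨a, ha, hfa⟩ := hpos b w hvw hlw
        refine ⟨facetX n k x ∩ facetX n k w, Finset.inter_subset_left, ?_, a, ha, ?_⟩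
        · have h1 := Finset.card_inter_add_card_sdiff (facetX n k x) (facetX n k w)
          rw [hcard, card_facetX] at h1
          omega
        · rw [hfa]
          exact Finset.inter_subset_right
      · -- main clause
        rintro t htne htb ⟨a0, ha0, hta0⟩
        have ha0b : a0 < b := by rw [Fin.lt_def]; exact ha0
        have hy := hord a0 b ha0b
        obtain ⟨w, hvw, hlw, hsub, hcard⟩ := kuhn_key n k hvx (hvalid a0) hy
        obtain ⟨a, ha, hfa⟩ := hpos b w hvw hlw
        refine ⟨facetX n k x ∩ facetX n k w, ?_, Finset.inter_subset_left, ?_, a, ha, ?_⟩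
        · intro p hp
          have h1 : p ∈ facetX n k (ofLex ((e a0) : Lex (Fin k → ℕ))) ∩ facetX n k x :=
            Finset.mem_inter.mpr ⟨hta0 hp, htb hp⟩
          have h2 := hsub h1
          rw [Finset.mem_inter] at h2
          exact Finset.mem_inter.mpr ⟨h2.2, h2.1⟩
        · have h1 := Finset.card_inter_add_card_sdiff (facetX n k x) (facetX n k w)
          rw [hcard, card_facetX] at h1
          omega
        · rw [hfa]
          exact Finset.inter_subset_right
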